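/- Let (M, N) be a perfect duality pair over a ring R. Then M is closed under direct limits, and consequently every flat left R-module belongs to M. -/

import Mathlib

set_option linter.unusedVariables false
set_option linter.unusedSectionVars false

open MulOpposite CategoryTheory

open MulOpposite

noncomputable section

section BT
variable (R : Type) [Ring R] (M : Type) [AddCommGroup M] [Module Rᵐᵒᵖ M]
  (N : Type) [AddCommGroup N] [Module R N]

def btRel : Submodule ℤ (TensorProduct ℤ M N) :=
  Submodule.span ℤ {x | ∃ (m : M) (r : R) (n : N),
    x = (op r • m) ⊗ₜ[ℤ] n - m ⊗ₜ[ℤ] (r • n)}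

def BT : Type := TensorProduct ℤ M N ⧸ btRel R M N

instance : AddCommGroup (BT R M N) :=
  inferInstanceAs (AddCommGroup (TensorProduct ℤ M N ⧸ btRel R M N))

variable {M N}

def BT.mk (m : M) (n : N) : BT R M N :=
  Submodule.Quotient.mk (m ⊗ₜ[ℤ] n)

variable {R}

theorem BT.mk_rel (m : M) (r : R) (n : N) : BT.mk R (op r • m) n = BT.mk R m (r • n) := by
  rw [BT.mk, BT.mk]
  show (Submodule.Quotient.mk _ : TensorProduct ℤ M N ⧸ btRel R M N) = Submodule.Quotient.mk _
  rw [Submodule.Quotient.eq]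
  exact Submodule.subset_span ⟨m, r, n, rfl⟩

theorem BT.mk_add_left (m m' : M) (n : N) :
    BT.mk R (m + m') n = BT.mk R m n + BT.mk R m' n := by
  have h : (Submodule.Quotient.mk ((m + m') ⊗ₜ[ℤ] n) : TensorProduct ℤ M N ⧸ btRel R M N) =
      Submodule.Quotient.mk (m ⊗ₜ[ℤ] n) + Submodule.Quotient.mk (m' ⊗ₜ[ℤ] n) := by
    rw [← Submodule.Quotient.mk_add, TensorProduct.add_tmul]
  exact h

theorem BT.mk_add_right (m : M) (n n' : N) :
    BT.mk R m (n + n') = BT.mk R m n + BT.mk R m n' := by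
  have h : (Submodule.Quotient.mk (m ⊗ₜ[ℤ] (n + n')) : TensorProduct ℤ M N ⧸ btRel R M N) =
      Submodule.Quotient.mk (m ⊗ₜ[ℤ] n) + Submodule.Quotient.mk (m ⊗ₜ[ℤ] n') := by
    rw [← Submodule.Quotient.mk_add, TensorProduct.tmul_add]
  exact h

theorem BT.mk_zero_left (n : N) : BT.mk R (0 : M) n = 0 := by
  rw [BT.mk, TensorProduct.zero_tmul]; rfl

theorem BT.mk_zero_right (m : M) : BT.mk R m (0 : N) = 0 := by
  rw [BT.mk, TensorProduct.tmul_zero]; rfl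

theorem BT.ind {P : BT R M N → Prop} (h0 : P 0) (hmk : ∀ m n, P (BT.mk R m n))
    (hadd : ∀ x y, P x → P y → P (x + y)) : ∀ x, P x := by
  intro x
  obtain ⟨y, rfl⟩ := Submodule.Quotient.mk_surjective (btRel R M N) x
  induction y using TensorProduct.induction_on with
  | zero => exact h0
  | tmul m n => exact hmk m n
  | add a b ha hb => rw [Submodule.Quotient.mk_add]; exact hadd _ _ ha hb

theorem BT.hom_ext {X : Type} [AddCommGroup X] {f g : BT R M N →ₗ[ℤ] X}
    (h : ∀ m n, f (BT.mk R m n) = g (BT.mk R m n)) : f = g :=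
  LinearMap.ext fun x => BT.ind (P := fun y => f y = g y) (by simp) h
    (fun a b ha hb => by
      show f (a + b) = g (a + b)
      rw [map_add, map_add]
      exact congrArg₂ (· + ·) ha hb) x

/-- Functoriality of the balanced tensor product in the right variable. -/
def BT.map (R : Type) [Ring R] {M : Type} [AddCommGroup M] [Module Rᵐᵒᵖ M]
    {N N' : Type} [AddCommGroup N] [Module R N] [AddCommGroup N'] [Module R N']
    (f : N →ₗ[R] N') : BT R M N →ₗ[ℤ] BT R M N' := by
  refine Submodule.mapQ _ _
    (TensorProduct.map LinearMap.id f.toAddMonoidHom.toIntLinearMap) ?_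
  rw [btRel, Submodule.span_le]
  rintro x ⟨m, r, n, rfl⟩
  simp only [SetLike.mem_coe, Submodule.mem_comap, map_sub, TensorProduct.map_tmul,
    LinearMap.id_apply, AddMonoidHom.coe_toIntLinearMap, LinearMap.toAddMonoidHom_coe,
    map_smul]
  refine Submodule.subset_span ⟨m, r, f n, ?_⟩
  erw [map_sub, TensorProduct.map_tmul, TensorProduct.map_tmul]
  simp

@[simp] theorem BT.map_mk (R : Type) [Ring R] {M : Type} [AddCommGroup M] [Module Rᵐᵒᵖ M]
    {N N' : Type} [AddCommGroup N] [Module R N] [AddCommGroup N'] [Module R N']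
    (f : N →ₗ[R] N') (m : M) (n : N) : BT.map R f (BT.mk R m n) = BT.mk R m (f n) := rfl

section lsmul
variable (T : Type) [Ring T] [Module T M] [SMulCommClass T Rᵐᵒᵖ M]

/-- action of an auxiliary ring `T` on `M ⊗_R N` through the left factor. -/
def BT.lsmul (t : T) : BT R M N →ₗ[ℤ] BT R M N := by
  refine Submodule.mapQ _ _
    (TensorProduct.map (DistribMulAction.toAddMonoidHom M t).toIntLinearMap LinearMap.id) ?_
  rw [btRel, Submodule.span_le]
  rintro x ⟨m, r, n, rfl⟩
  simp only [SetLike.mem_coe, Submodule.mem_comap, map_sub, TensorProduct.map_tmul,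
    LinearMap.id_apply, AddMonoidHom.coe_toIntLinearMap, DistribMulAction.toAddMonoidHom_apply]
  refine Submodule.subset_span ⟨t • m, r, n, ?_⟩
  erw [map_sub, TensorProduct.map_tmul, TensorProduct.map_tmul]
  simp [smul_comm t (op r) m]

@[simp] theorem BT.lsmul_mk (t : T) (m : M) (n : N) :
    BT.lsmul T t (BT.mk R m n) = BT.mk R (t • m) n := rfl

theorem BT.lsmul_one : BT.lsmul (R := R) (M := M) (N := N) T 1 = LinearMap.id :=
  BT.hom_ext fun m n => by simp

theorem BT.lsmul_mul (t t' : T) :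
    BT.lsmul (R := R) (M := M) (N := N) T (t * t') = (BT.lsmul T t).comp (BT.lsmul T t') :=
  BT.hom_ext fun m n => by simp [mul_smul]

theorem BT.lsmul_add (t t' : T) :
    BT.lsmul (R := R) (M := M) (N := N) T (t + t') = BT.lsmul T t + BT.lsmul T t' :=
  BT.hom_ext fun m n => by simp [add_smul, BT.mk_add_left]

theorem BT.lsmul_zero : BT.lsmul (R := R) (M := M) (N := N) T 0 = 0 :=
  BT.hom_ext fun m n => by simp [BT.mk_zero_left]

/-- The left auxiliary module structure on the balanced tensor product. -/
instance (priority := 100) BT.instLModule : Module T (BT R M N) where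
  smul t x := BT.lsmul T t x
  one_smul x := by show BT.lsmul T 1 x = x; rw [BT.lsmul_one]; rfl
  mul_smul t t' x := by
    show BT.lsmul T (t * t') x = BT.lsmul T t (BT.lsmul T t' x)
    rw [BT.lsmul_mul]; rfl
  smul_zero t := map_zero (BT.lsmul T t)
  smul_add t x y := map_add (BT.lsmul T t) x y
  add_smul t t' x := by
    show BT.lsmul T (t + t') x = BT.lsmul T t x + BT.lsmul T t' x
    rw [BT.lsmul_add]; rfl
  zero_smul x := by show BT.lsmul T 0 x = 0; rw [BT.lsmul_zero]; rfl

theorem BT.smul_mk (t : T) (m : M) (n : N) :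
    t • (BT.mk R m n) = BT.mk R (t • m) n := BT.lsmul_mk T t m n

end lsmul

section rsmul
variable (T : Type) [Ring T] [Module T N] [SMulCommClass T R N]

/-- action of an auxiliary ring `T` on `M ⊗_R N` through the right factor. -/
def BT.rsmul (t : T) : BT R M N →ₗ[ℤ] BT R M N := by
  refine Submodule.mapQ _ _
    (TensorProduct.map LinearMap.id (DistribMulAction.toAddMonoidHom N t).toIntLinearMap) ?_
  rw [btRel, Submodule.span_le]
  rintro x ⟨m, r, n, rfl⟩
  simp only [SetLike.mem_coe, Submodule.mem_comap, map_sub, TensorProduct.map_tmul,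
    LinearMap.id_apply, AddMonoidHom.coe_toIntLinearMap, DistribMulAction.toAddMonoidHom_apply]
  refine Submodule.subset_span ⟨m, r, t • n, ?_⟩
  erw [map_sub, TensorProduct.map_tmul, TensorProduct.map_tmul]
  simp [smul_comm t r n]

@[simp] theorem BT.rsmul_mk (t : T) (m : M) (n : N) :
    BT.rsmul T t (BT.mk R m n) = BT.mk R m (t • n) := rfl

theorem BT.rsmul_one : BT.rsmul (R := R) (M := M) (N := N) T 1 = LinearMap.id :=
  BT.hom_ext fun m n => by simp

theorem BT.rsmul_mul (t t' : T) :
    BT.rsmul (R := R) (M := M) (N := N) T (t * t') = (BT.rsmul T t).comp (BT.rsmul T t') :=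
  BT.hom_ext fun m n => by simp [mul_smul]

theorem BT.rsmul_add (t t' : T) :
    BT.rsmul (R := R) (M := M) (N := N) T (t + t') = BT.rsmul T t + BT.rsmul T t' :=
  BT.hom_ext fun m n => by simp [add_smul, BT.mk_add_right]

theorem BT.rsmul_zero : BT.rsmul (R := R) (M := M) (N := N) T 0 = 0 :=
  BT.hom_ext fun m n => by simp [BT.mk_zero_right]

/-- The right auxiliary module structure on the balanced tensor product. -/
instance (priority := 90) BT.instRModule : Module T (BT R M N) where
  smul t x := BT.rsmul T t x
  one_smul x := by show BT.rsmul T 1 x = x; rw [BT.rsmul_one]; rfl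
  mul_smul t t' x := by
    show BT.rsmul T (t * t') x = BT.rsmul T t (BT.rsmul T t' x)
    rw [BT.rsmul_mul]; rfl
  smul_zero t := map_zero (BT.rsmul T t)
  smul_add t x y := map_add (BT.rsmul T t) x y
  add_smul t t' x := by
    show BT.rsmul T (t + t') x = BT.rsmul T t x + BT.rsmul T t' x
    rw [BT.rsmul_add]; rfl
  zero_smul x := by show BT.rsmul T 0 x = 0; rw [BT.rsmul_zero]; rfl

theorem BT.smul_mk_right (t : T) (m : M) (n : N) :
    t • (BT.mk R m n) = BT.mk R m (t • n) := BT.rsmul_mk T t m n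

end rsmul
end BT
end


noncomputable section

set_option linter.unusedSectionVars false

/-! ### Hom-module structures -/

section HomMod
variable (R S : Type) [Ring R] [Ring S]
variable (C : Type) [AddCommGroup C] [Module S C] [Module Rᵐᵒᵖ C] [SMulCommClass S Rᵐᵒᵖ C]

/-- For an `(S,R)`-bimodule `C` and a left `S`-module `X`, the abelian group
`Hom_S(C,X)` is a left `R`-module via `(r • f) c = f (c • r)`. -/
instance homLeftModule (X : Type) [AddCommGroup X] [Module S X] :
    Module R (C →ₗ[S] X) where
  smul r f :=
    { toFun := fun c => f (op r • c)
      map_add' := fun c c' => by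
        show f (op r • (c + c')) = f (op r • c) + f (op r • c')
        rw [smul_add, map_add]
      map_smul' := fun s c => by
        show f (op r • s • c) = s • f (op r • c)
        rw [← smul_comm s (op r) c, map_smul] }
  one_smul f := LinearMap.ext fun c => by
    show f (op (1 : R) • c) = f c
    rw [op_one, one_smul]
  mul_smul r r' f := LinearMap.ext fun c => by
    show f (op (r * r') • c) = f (op r' • op r • c)
    rw [← mul_smul, ← op_mul]
  smul_add r f g := rfl
  smul_zero r := rfl
  add_smul r r' f := LinearMap.ext fun c => by
    show f (op (r + r') • c) = f (op r • c) + f (op r' • c)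
    rw [← map_add, MulOpposite.op_add, add_smul]
  zero_smul f := LinearMap.ext fun c => by
    show f (op (0 : R) • c) = 0
    rw [op_zero, zero_smul, map_zero]

theorem homLeftModule_smul_apply (X : Type) [AddCommGroup X] [Module S X]
    (r : R) (f : C →ₗ[S] X) (c : C) : (r • f) c = f (op r • c) := rfl

/-- For an `(S,R)`-bimodule `C` and a right `R`-module `Y`, the abelian group
`Hom_{Rᵒᵖ}(C,Y)` is a right `S`-module via `(f • s) c = f (s • c)`. -/
instance homRightModule (Y : Type) [AddCommGroup Y] [Module Rᵐᵒᵖ Y] :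
    Module Sᵐᵒᵖ (C →ₗ[Rᵐᵒᵖ] Y) where
  smul s f :=
    { toFun := fun c => f (s.unop • c)
      map_add' := fun c c' => by
        show f (s.unop • (c + c')) = f (s.unop • c) + f (s.unop • c')
        rw [smul_add, map_add]
      map_smul' := fun r c => by
        show f (s.unop • r • c) = r • f (s.unop • c)
        rw [smul_comm s.unop r c, map_smul] }
  one_smul f := LinearMap.ext fun c => by
    show f ((1 : Sᵐᵒᵖ).unop • c) = f c
    rw [unop_one, one_smul]
  mul_smul s s' f := LinearMap.ext fun c => by
    show f ((s * s').unop • c) = f (s'.unop • s.unop • c)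
    rw [unop_mul, mul_smul]
  smul_add s f g := rfl
  smul_zero s := rfl
  add_smul s s' f := LinearMap.ext fun c => by
    show f ((s + s').unop • c) = f (s.unop • c) + f (s'.unop • c)
    rw [← map_add, MulOpposite.unop_add, add_smul]
  zero_smul f := LinearMap.ext fun c => by
    show f ((0 : Sᵐᵒᵖ).unop • c) = 0
    rw [unop_zero, zero_smul, map_zero]

theorem homRightModule_smul_apply (Y : Type) [AddCommGroup Y] [Module Rᵐᵒᵖ Y]
    (s : Sᵐᵒᵖ) (f : C →ₗ[Rᵐᵒᵖ] Y) (c : C) : (s • f) c = f (s.unop • c) := rfl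

end HomMod

/-! ### Character modules of one-sided modules -/

section Char
variable (R : Type) [Ring R] (M : Type) [AddCommGroup M]

/-- The character module of a left module is a right module. -/
instance instCharRight [Module R M] : Module Rᵐᵒᵖ (CharacterModule M) where
  smul r f := f.comp (DistribMulAction.toAddMonoidHom M r.unop)
  one_smul f := DFunLike.ext _ _ fun a => by
    show f ((1 : Rᵐᵒᵖ).unop • a) = f a
    rw [unop_one, one_smul]
  mul_smul r r' f := DFunLike.ext _ _ fun a => by
    show f ((r * r').unop • a) = f (r'.unop • r.unop • a)
    rw [unop_mul, mul_smul]
  smul_add r f g := rfl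
  smul_zero r := rfl
  add_smul r r' f := DFunLike.ext _ _ fun a => by
    show f ((r + r').unop • a) = f (r.unop • a) + f (r'.unop • a)
    rw [← map_add, MulOpposite.unop_add, add_smul]
  zero_smul f := DFunLike.ext _ _ fun a => by
    show f ((0 : Rᵐᵒᵖ).unop • a) = 0
    rw [unop_zero, zero_smul, map_zero]

theorem instCharRight_smul_apply [Module R M] (r : Rᵐᵒᵖ) (f : CharacterModule M) (a : M) :
    (r • f) a = f (r.unop • a) := rfl

/-- The character module of a right module is a left module. -/
instance instCharLeft [Module Rᵐᵒᵖ M] : Module R (CharacterModule M) where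
  smul r f := f.comp (DistribMulAction.toAddMonoidHom M (op r))
  one_smul f := DFunLike.ext _ _ fun a => by
    show f (op (1 : R) • a) = f a
    rw [op_one, one_smul]
  mul_smul r r' f := DFunLike.ext _ _ fun a => by
    show f (op (r * r') • a) = f (op r' • op r • a)
    rw [← mul_smul, ← op_mul]
  smul_add r f g := rfl
  smul_zero r := rfl
  add_smul r r' f := DFunLike.ext _ _ fun a => by
    show f (op (r + r') • a) = f (op r • a) + f (op r' • a)
    rw [← map_add, MulOpposite.op_add, add_smul]
  zero_smul f := DFunLike.ext _ _ fun a => by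
    show f (op (0 : R) • a) = 0
    rw [op_zero, zero_smul, map_zero]

theorem instCharLeft_smul_apply [Module Rᵐᵒᵖ M] (r : R) (f : CharacterModule M) (a : M) :
    (r • f) a = f (op r • a) := rfl

end Char
end

noncomputable section
section TorExt

/-- Tensoring with a fixed right `R`-module `M`, as a functor on left `R`-modules. -/
def btF (R : Type) [Ring R] (M : Type) [AddCommGroup M] [Module Rᵐᵒᵖ M] :
    ModuleCat.{0} R ⥤ AddCommGrpCat.{0} where
  obj N := AddCommGrpCat.of (BT R M N)
  map f := AddCommGrpCat.ofHom (BT.map R f.hom).toAddMonoidHom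
  map_id N := by
    have h : BT.map (M := M) R (LinearMap.id : ↥N →ₗ[R] ↥N) = LinearMap.id :=
      BT.hom_ext fun m n => by simp
    ext x
    show BT.map (M := M) R (LinearMap.id : ↥N →ₗ[R] ↥N) x = x
    rw [h]; rfl
  map_comp {X Y Z} f g := by
    have h : BT.map (M := M) R (LinearMap.comp g.hom f.hom)
        = (BT.map R g.hom).comp (BT.map R f.hom) :=
      BT.hom_ext fun m n => by simp
    ext x
    show BT.map (M := M) R (LinearMap.comp g.hom f.hom) x
      = BT.map R g.hom (BT.map R f.hom x)
    rw [h]; rfl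

instance btF_additive (R : Type) [Ring R] (M : Type) [AddCommGroup M] [Module Rᵐᵒᵖ M] :
    (btF R M).Additive where
  map_add := by
    intro N N' f g
    have h : BT.map (M := M) R (f + g).hom
        = BT.map R f.hom + BT.map R g.hom :=
      BT.hom_ext fun m n => by
        rw [show BT.map R (f + g).hom (BT.mk R m n)
            = BT.mk R m (f n + g n) from rfl, BT.mk_add_right]
        rfl
    ext x
    show BT.map (M := M) R (f + g).hom x
      = BT.map R f.hom x + BT.map R g.hom x
    rw [h]; rfl

/-- `Tor_i^R(M, N)` for a right `R`-module `M` and a left `R`-module `N`,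
computed as the `i`-th left derived functor of `M ⊗_R -`. -/
def TorGrp (R : Type) [Ring R] (M : Type) [AddCommGroup M] [Module Rᵐᵒᵖ M]
    (N : Type) [AddCommGroup N] [Module R N] (i : ℕ) : Type :=
  ((btF R M).leftDerived i).obj (ModuleCat.of R N)

instance (R : Type) [Ring R] (M : Type) [AddCommGroup M] [Module Rᵐᵒᵖ M]
    (N : Type) [AddCommGroup N] [Module R N] (i : ℕ) : AddCommGroup (TorGrp R M N i) :=
  inferInstanceAs (AddCommGroup ↑(((btF R M).leftDerived i).obj (ModuleCat.of R N)))

/-- `Ext^i_R(A, B)`, computed by deriving `Hom_R(-, B)` using projective resolutions. -/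
def ExtGrp (R : Type) [Ring R] (A : Type) [AddCommGroup A] [Module R A]
    (B : Type) [AddCommGroup B] [Module R B] (i : ℕ) : Type :=
  ((Ext ℤ (ModuleCat.{0} R) i).obj (Opposite.op (ModuleCat.of R A))).obj (ModuleCat.of R B)

instance (R : Type) [Ring R] (A : Type) [AddCommGroup A] [Module R A]
    (B : Type) [AddCommGroup B] [Module R B] (i : ℕ) : AddCommGroup (ExtGrp R A B i) :=
  inferInstanceAs (AddCommGroup
    ↑(((Ext ℤ (ModuleCat.{0} R) i).obj (Opposite.op (ModuleCat.of R A))).obj (ModuleCat.of R B)))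

end TorExt

end

noncomputable section
section Semidualizing
variable (R S : Type) [Ring R] [Ring S]
variable (C : Type) [AddCommGroup C] [Module S C] [Module Rᵐᵒᵖ C]
  [SMulCommClass S Rᵐᵒᵖ C] [SMulCommClass Rᵐᵒᵖ S C]

/-- The natural map `A → Hom_S(C, C ⊗_R A)`. -/
def muR (A : Type) [AddCommGroup A] [Module R A] : A → (C →ₗ[S] BT R C A) :=
  fun a =>
  { toFun := fun c => BT.mk R c a
    map_add' := fun c c' => BT.mk_add_left c c' a
    map_smul' := fun s c => (BT.smul_mk S s c a).symm }

/-- The auxiliary evaluation on the plain tensor product. -/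
def nuSAux (X : Type) [AddCommGroup X] [Module S X] :
    TensorProduct ℤ C (C →ₗ[S] X) →ₗ[ℤ] X :=
  TensorProduct.lift (LinearMap.mk₂ ℤ (fun c (f : C →ₗ[S] X) => f c)
    (fun c c' f => map_add f c c')
    (fun z c f => map_zsmul f z c)
    (fun c f g => rfl)
    (fun z c f => rfl))

/-- The natural evaluation map `C ⊗_R Hom_S(C, X) → X`. -/
def nuS (X : Type) [AddCommGroup X] [Module S X] : BT R C (C →ₗ[S] X) → X :=
  fun x => Submodule.liftQ (btRel R C (C →ₗ[S] X)) (nuSAux S C X) (by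
    rw [btRel, Submodule.span_le]
    rintro y ⟨c, r, f, rfl⟩
    simp only [SetLike.mem_coe, LinearMap.mem_ker, map_sub]
    have h1 : nuSAux S C X ((op r • c) ⊗ₜ[ℤ] f) = f (op r • c) := rfl
    have h2 : nuSAux S C X (c ⊗ₜ[ℤ] (r • f)) = f (op r • c) := rfl
    rw [h1, h2, sub_self]) x

/-- The natural map `Y → Hom_{Rᵒᵖ}(C, Y ⊗_S C)`. -/
def muOp (Y : Type) [AddCommGroup Y] [Module Sᵐᵒᵖ Y] : Y → (C →ₗ[Rᵐᵒᵖ] BT S Y C) :=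
  fun y =>
  { toFun := fun c => BT.mk S y c
    map_add' := fun c c' => BT.mk_add_right y c c'
    map_smul' := fun r c => (BT.smul_mk_right Rᵐᵒᵖ r y c).symm }

/-- The auxiliary evaluation on the plain tensor product, opposite side. -/
def nuOpAux (B : Type) [AddCommGroup B] [Module Rᵐᵒᵖ B] :
    TensorProduct ℤ (C →ₗ[Rᵐᵒᵖ] B) C →ₗ[ℤ] B :=
  TensorProduct.lift (LinearMap.mk₂ ℤ (fun (f : C →ₗ[Rᵐᵒᵖ] B) c => f c)
    (fun f g c => rfl)
    (fun z f c => rfl)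
    (fun f c c' => map_add f c c')
    (fun z f c => map_zsmul f z c))

/-- The natural evaluation map `Hom_{Rᵒᵖ}(C, B) ⊗_S C → B`. -/
def nuOp (B : Type) [AddCommGroup B] [Module Rᵐᵒᵖ B] : BT S (C →ₗ[Rᵐᵒᵖ] B) C → B :=
  fun x => Submodule.liftQ (btRel S (C →ₗ[Rᵐᵒᵖ] B) C) (nuOpAux R C B) (by
    rw [btRel, Submodule.span_le]
    rintro y ⟨f, s, c, rfl⟩
    simp only [SetLike.mem_coe, LinearMap.mem_ker, map_sub]
    have h1 : nuOpAux R C B ((op s • f) ⊗ₜ[ℤ] c) = f (s • c) := rfl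
    have h2 : nuOpAux R C B (f ⊗ₜ[ℤ] (s • c)) = f (s • c) := rfl
    rw [h1, h2, sub_self]) x

/-- The Auslander class `A_C(R)`. -/
def AuslanderR (A : Type) [AddCommGroup A] [Module R A] : Prop :=
  (∀ i : ℕ, 1 ≤ i → Subsingleton (TorGrp R C A i)) ∧
  (∀ i : ℕ, 1 ≤ i → Subsingleton (ExtGrp S C (BT R C A) i)) ∧
  Function.Bijective (muR R S C A)

/-- The Bass class `B_C(S)`. -/
def BassS (X : Type) [AddCommGroup X] [Module S X] : Prop :=
  (∀ i : ℕ, 1 ≤ i → Subsingleton (ExtGrp S C X i)) ∧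
  (∀ i : ℕ, 1 ≤ i → Subsingleton (TorGrp R C (C →ₗ[S] X) i)) ∧
  Function.Bijective (nuS R S C X)

/-- The Auslander class `A_C(Sᵒᵖ)`. -/
def AuslanderOp (Y : Type) [AddCommGroup Y] [Module Sᵐᵒᵖ Y] : Prop :=
  (∀ i : ℕ, 1 ≤ i → Subsingleton (TorGrp S Y C i)) ∧
  (∀ i : ℕ, 1 ≤ i → Subsingleton (ExtGrp Rᵐᵒᵖ C (BT S Y C) i)) ∧
  Function.Bijective (muOp R S C Y)

/-- The Bass class `B_C(Rᵒᵖ)`. -/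
def BassOp (B : Type) [AddCommGroup B] [Module Rᵐᵒᵖ B] : Prop :=
  (∀ i : ℕ, 1 ≤ i → Subsingleton (ExtGrp Rᵐᵒᵖ C B i)) ∧
  (∀ i : ℕ, 1 ≤ i → Subsingleton (TorGrp S (C →ₗ[Rᵐᵒᵖ] B) C i)) ∧
  Function.Bijective (nuOp R S C B)

/-- `M` is of type `FP∞`: it admits a projective resolution by finitely generated
free modules. -/
def IsFPInfty (A : Type) [Ring A] (M : Type) [AddCommGroup M] [Module A M] : Prop :=
  ∃ P : CategoryTheory.ProjectiveResolution (ModuleCat.of A M),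
    ∀ n : ℕ, Module.Finite A (P.complex.X n) ∧ Module.Free A (P.complex.X n)

/-- The homothety map `S → Hom_{Rᵒᵖ}(C, C)`. -/
def homothetyS : S → (C →ₗ[Rᵐᵒᵖ] C) := fun s =>
  { toFun := fun c => s • c
    map_add' := fun c c' => smul_add s c c'
    map_smul' := fun r c => by
      show s • (r • c) = r • (s • c)
      rw [smul_comm] }

/-- The homothety map `R → Hom_S(C, C)`. -/
def homothetyR : R → (C →ₗ[S] C) := fun r =>
  { toFun := fun c => op r • c
    map_add' := fun c c' => smul_add (op r) c c'
    map_smul' := fun s c => by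
      show op r • (s • c) = s • (op r • c)
      rw [smul_comm] }

/-- `C` is a semidualizing `(S,R)`-bimodule. -/
structure IsSemidualizing : Prop where
  fp_left : IsFPInfty S C
  fp_right : IsFPInfty Rᵐᵒᵖ C
  homothety_S : Function.Bijective (homothetyS R S C)
  homothety_R : Function.Bijective (homothetyR R S C)
  ext_S : ∀ i : ℕ, 1 ≤ i → Subsingleton (ExtGrp S C C i)
  ext_R : ∀ i : ℕ, 1 ≤ i → Subsingleton (ExtGrp Rᵐᵒᵖ C C i)

/-- `C` is faithfully semidualizing. -/
structure IsFaithfullySemidualizing extends IsSemidualizing R S C : Prop where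
  faithful_S : ∀ (X : Type) [AddCommGroup X] [Module S X],
    (∀ f : C →ₗ[S] X, f = 0) → Subsingleton X
  faithful_R : ∀ (Y : Type) [AddCommGroup Y] [Module Rᵐᵒᵖ Y],
    (∀ f : C →ₗ[Rᵐᵒᵖ] Y, f = 0) → Subsingleton Y

end Semidualizing

end

noncomputable section
section DualityPairs

/-- A class of (bundled) left `R`-modules. -/
abbrev ModClass (R : Type) [Ring R] := Set (ModuleCat.{0} R)

/-- `(M, N)` is a duality pair over `R`: a left `R`-module lies in `M` iff its
character module lies in `N`, and `N` is closed under direct summands and finite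
direct sums. -/
structure IsDualityPair (R : Type) [Ring R] (M : ModClass R) (N : ModClass Rᵐᵒᵖ) : Prop where
  char_mem : ∀ X : ModuleCat.{0} R,
    X ∈ M ↔ ModuleCat.of Rᵐᵒᵖ (CharacterModule X) ∈ N
  summand_closed : ∀ (X Y : ModuleCat.{0} Rᵐᵒᵖ) (i : Y →ₗ[Rᵐᵒᵖ] X) (p : X →ₗ[Rᵐᵒᵖ] Y),
    p.comp i = LinearMap.id → X ∈ N → Y ∈ N
  finsum_closed : ∀ X Y : ModuleCat.{0} Rᵐᵒᵖ,
    X ∈ N → Y ∈ N → ModuleCat.of Rᵐᵒᵖ (↥X × ↥Y) ∈ N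

/-- `(N, M)` is a duality pair over `Rᵒᵖ`: a right `R`-module lies in `N` iff its
character module lies in `M`, and `M` is closed under direct summands and finite
direct sums.  A duality pair `(M, N)` with this additional property is *symmetric*. -/
structure IsDualityPairOp (R : Type) [Ring R] (N : ModClass Rᵐᵒᵖ) (M : ModClass R) : Prop where
  char_mem : ∀ Y : ModuleCat.{0} Rᵐᵒᵖ,
    Y ∈ N ↔ ModuleCat.of R (CharacterModule Y) ∈ M
  summand_closed : ∀ (X Y : ModuleCat.{0} R) (i : Y →ₗ[R] X) (p : X →ₗ[R] Y),
    p.comp i = LinearMap.id → X ∈ M → Y ∈ M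
  finsum_closed : ∀ X Y : ModuleCat.{0} R,
    X ∈ M → Y ∈ M → ModuleCat.of R (↥X × ↥Y) ∈ M

/-- A monomorphism of left `R`-modules is pure if it stays injective after applying
`M ⊗_R -` for every right `R`-module `M`. -/
def IsPureMono (R : Type) [Ring R] {A B : Type} [AddCommGroup A] [Module R A]
    [AddCommGroup B] [Module R B] (f : A →ₗ[R] B) : Prop :=
  Function.Injective f ∧
  ∀ (M : Type) [AddCommGroup M] [Module Rᵐᵒᵖ M],
    Function.Injective (BT.map (M := M) R f)

end DualityPairs

section Induced
variable (R S : Type) [Ring R] [Ring S]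
variable (C : Type) [AddCommGroup C] [Module S C] [Module Rᵐᵒᵖ C]
  [SMulCommClass S Rᵐᵒᵖ C] [SMulCommClass Rᵐᵒᵖ S C]

/-- The induced class `M^C(S)` of left `S`-modules isomorphic to `C ⊗_R A`
with `A` in the Auslander class and in `M`. -/
def inducedMC (Mcl : ModClass R) : ModClass S :=
  {X : ModuleCat.{0} S | ∃ A : ModuleCat.{0} R,
    AuslanderR R S C A ∧ A ∈ Mcl ∧ Nonempty (↥X ≃ₗ[S] BT R C ↥A)}

/-- The induced class `N^C(Sᵒᵖ)` of right `S`-modules isomorphic to `Hom_{Rᵒᵖ}(C, B)`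
with `B` in the Bass class and in `N`. -/
def inducedNC (Ncl : ModClass Rᵐᵒᵖ) : ModClass Sᵐᵒᵖ :=
  {Y : ModuleCat.{0} Sᵐᵒᵖ | ∃ B : ModuleCat.{0} Rᵐᵒᵖ,
    BassOp R S C ↥B ∧ B ∈ Ncl ∧ Nonempty (↥Y ≃ₗ[Sᵐᵒᵖ] (C →ₗ[Rᵐᵒᵖ] ↥B))}

end Induced

section Resolutions
variable (R : Type) [Ring R]

/-- `ResLen R cl n X` : `X` admits a resolution of length `n` by modules in `cl`. -/
def ResLen (cl : ModClass R) : ℕ → ModuleCat.{0} R → Prop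
  | 0, X => X ∈ cl
  | n+1, X => ∃ (Y : ModuleCat.{0} R) (f : ↥Y →ₗ[R] ↥X), Y ∈ cl ∧ Function.Surjective f ∧
      ResLen cl n (ModuleCat.of R (LinearMap.ker f))

/-- `X` has resolution dimension at most `n` with respect to `cl`. -/
def ResDimLE (cl : ModClass R) (n : ℕ) (X : ModuleCat.{0} R) : Prop :=
  ∃ m ≤ n, ResLen R cl m X

/-- `CoresLen R cl n X` : `X` admits a coresolution of length `n` by modules in `cl`. -/
def CoresLen (cl : ModClass R) : ℕ → ModuleCat.{0} R → Prop
  | 0, X => X ∈ cl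
  | n+1, X => ∃ (Y : ModuleCat.{0} R) (f : ↥X →ₗ[R] ↥Y), Y ∈ cl ∧ Function.Injective f ∧
      CoresLen cl n (ModuleCat.of R (↥Y ⧸ LinearMap.range f))

/-- `X` has coresolution dimension at most `n` with respect to `cl`. -/
def CoresDimLE (cl : ModClass R) (n : ℕ) (X : ModuleCat.{0} R) : Prop :=
  ∃ m ≤ n, CoresLen R cl m X

end Resolutions

section Gorenstein
open CategoryTheory
variable (R : Type) [Ring R]

/-- Exactness of a cochain complex of modules at every spot. -/
def AcyclicComplex (K : CochainComplex (ModuleCat.{0} R) ℤ) : Prop :=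
  ∀ n : ℤ, K.ExactAt n

/-- `X` is `(Z, Y)`-Gorenstein injective: `X` is a cycle of an exact complex with
components in `Y` which stays exact under `Hom(Z₀, -)` for every `Z₀ ∈ Z`. -/
def GorInj (Z Y : ModClass R) (X : Type) [AddCommGroup X] [Module R X] : Prop :=
  ∃ K : CochainComplex (ModuleCat.{0} R) ℤ,
    AcyclicComplex R K ∧
    (∀ n : ℤ, K.X n ∈ Y) ∧
    (∀ Z₀ : ModuleCat.{0} R, Z₀ ∈ Z → ∀ n : ℤ,
      ((((CategoryTheory.preadditiveCoyoneda.obj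
        (Opposite.op Z₀)).mapHomologicalComplex _).obj K).ExactAt n)) ∧
    Nonempty (X ≃ₗ[R] LinearMap.ker ((K.d 0 1).hom : ↥(K.X 0) →ₗ[R] ↥(K.X 1)))

end Gorenstein

section GorensteinFlat
open CategoryTheory
variable (S : Type) [Ring S]

/-- `X` is Gorenstein `(Xc, Yc)`-flat : `X` is a cycle of an exact complex with
components in `Xc` which stays exact under `Y₀ ⊗_S -` for every `Y₀ ∈ Yc`. -/
def GorFlat (Xc : ModClass S) (Yc : ModClass Sᵐᵒᵖ) (X : Type) [AddCommGroup X]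
    [Module S X] : Prop :=
  ∃ K : CochainComplex (ModuleCat.{0} S) ℤ,
    AcyclicComplex S K ∧
    (∀ n : ℤ, K.X n ∈ Xc) ∧
    (∀ Y₀ : ModuleCat.{0} Sᵐᵒᵖ, Y₀ ∈ Yc → ∀ n : ℤ,
      ((((btF S ↥Y₀).mapHomologicalComplex _).obj K).ExactAt n)) ∧
    Nonempty (X ≃ₗ[S] LinearMap.ker ((K.d 0 1).hom : ↥(K.X 0) →ₗ[S] ↥(K.X 1)))

end GorensteinFlat

end

noncomputable section
/-- `cl` is closed under extensions. -/
def ExtClosed (R : Type) [Ring R] (cl : ModClass R) : Prop :=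
  ∀ (A B D : Type) [AddCommGroup A] [Module R A] [AddCommGroup B] [Module R B]
    [AddCommGroup D] [Module R D] (f : A →ₗ[R] B) (g : B →ₗ[R] D),
    Function.Injective f → Function.Surjective g →
    LinearMap.range f = LinearMap.ker g →
    ModuleCat.of R A ∈ cl → ModuleCat.of R D ∈ cl → ModuleCat.of R B ∈ cl
end

noncomputable section
/-- Functoriality of the balanced tensor product in the left variable. -/
def BT.mapLeft (R : Type) [Ring R] {M M' : Type} [AddCommGroup M] [Module Rᵐᵒᵖ M]
    [AddCommGroup M'] [Module Rᵐᵒᵖ M'] {N : Type} [AddCommGroup N] [Module R N]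
    (g : M →ₗ[Rᵐᵒᵖ] M') : BT R M N →ₗ[ℤ] BT R M' N := by
  refine Submodule.mapQ _ _
    (TensorProduct.map g.toAddMonoidHom.toIntLinearMap LinearMap.id) ?_
  rw [btRel, Submodule.span_le]
  rintro x ⟨m, r, n, rfl⟩
  simp only [SetLike.mem_coe, Submodule.mem_comap, map_sub, TensorProduct.map_tmul,
    LinearMap.id_apply, AddMonoidHom.coe_toIntLinearMap, LinearMap.toAddMonoidHom_coe,
    map_smul]
  refine Submodule.subset_span ⟨g m, r, n, ?_⟩
  erw [map_sub, TensorProduct.map_tmul, TensorProduct.map_tmul]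
  simp

/-- A left module `F` over a (possibly noncommutative) ring is flat if `- ⊗_R F`
preserves injectivity of maps of right `R`-modules. -/
def IsFlatModule (R : Type) [Ring R] (F : Type) [AddCommGroup F] [Module R F] : Prop :=
  ∀ (M M' : Type) [AddCommGroup M] [Module Rᵐᵒᵖ M] [AddCommGroup M'] [Module Rᵐᵒᵖ M']
    (g : M →ₗ[Rᵐᵒᵖ] M'), Function.Injective g →
    Function.Injective (BT.mapLeft (N := F) R g)
end
/-! ### Auxiliary material for Statement 7 -/

noncomputable section Stmt7Aux
open MulOpposite

variable {R : Type} [Ring R]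

theorem BT.map_comp' {M : Type} [AddCommGroup M] [Module Rᵐᵒᵖ M]
    {N N' N'' : Type} [AddCommGroup N] [Module R N] [AddCommGroup N'] [Module R N']
    [AddCommGroup N''] [Module R N''] (f : N →ₗ[R] N') (g : N' →ₗ[R] N'') :
    BT.map (M := M) R (g.comp f) = (BT.map R g).comp (BT.map R f) :=
  BT.hom_ext fun _ _ => rfl

theorem BT.mapLeft_mk' {M M' N : Type} [AddCommGroup M] [Module Rᵐᵒᵖ M]
    [AddCommGroup M'] [Module Rᵐᵒᵖ M'] [AddCommGroup N] [Module R N]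
    (g : M →ₗ[Rᵐᵒᵖ] M') (m : M) (n : N) :
    BT.mapLeft R g (BT.mk R m n) = BT.mk R (g m) n := rfl

theorem BT.mapLeft_comp' {M M' M'' N : Type} [AddCommGroup M] [Module Rᵐᵒᵖ M]
    [AddCommGroup M'] [Module Rᵐᵒᵖ M'] [AddCommGroup M''] [Module Rᵐᵒᵖ M'']
    [AddCommGroup N] [Module R N] (f : M →ₗ[Rᵐᵒᵖ] M') (g : M' →ₗ[Rᵐᵒᵖ] M'') :
    BT.mapLeft (N := N) R (g.comp f) = (BT.mapLeft R g).comp (BT.mapLeft R f) :=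
  BT.hom_ext fun _ _ => rfl

theorem BT.exists_list {M N : Type} [AddCommGroup M] [Module Rᵐᵒᵖ M]
    [AddCommGroup N] [Module R N] (t : BT R M N) :
    ∃ L : List (M × N), t = (L.map fun p => BT.mk R p.1 p.2).sum := by
  refine BT.ind (P := fun t => ∃ L : List (M × N), t = (L.map fun p => BT.mk R p.1 p.2).sum)
    ?_ ?_ ?_ t
  · exact ⟨[], rfl⟩
  · exact fun m n => ⟨[(m, n)], by simp⟩
  · rintro x y ⟨L1, rfl⟩ ⟨L2, rfl⟩
    exact ⟨L1 ++ L2, by rw [List.map_append, List.sum_append]⟩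

theorem BT.mk_sum_left' {M N : Type} [AddCommGroup M] [Module Rᵐᵒᵖ M]
    [AddCommGroup N] [Module R N] {α : Type} (s : Finset α) (m : α → M) (n : N) :
    BT.mk R (∑ i ∈ s, m i) n = ∑ i ∈ s, BT.mk R (m i) n := by
  classical
  induction s using Finset.induction_on with
  | empty => simp [BT.mk_zero_left]
  | insert _ _ h ih => rw [Finset.sum_insert h, Finset.sum_insert h, BT.mk_add_left, ih]

theorem BT.mk_sum_right' {M N : Type} [AddCommGroup M] [Module Rᵐᵒᵖ M]
    [AddCommGroup N] [Module R N] {α : Type} (s : Finset α) (m : M) (n : α → N) :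
    BT.mk R m (∑ i ∈ s, n i) = ∑ i ∈ s, BT.mk R m (n i) := by
  classical
  induction s using Finset.induction_on with
  | empty => simp [BT.mk_zero_right]
  | insert _ _ h ih => rw [Finset.sum_insert h, Finset.sum_insert h, BT.mk_add_right, ih]

/-- If the inclusion `i : K → B` is locally split, then `X ⊗ K → X ⊗ B` is injective
for every right module `X`. -/
theorem bt_injective_of_locally_split {K B : Type} [AddCommGroup K] [Module R K]
    [AddCommGroup B] [Module R B] (i : K →ₗ[R] B)
    (hsplit : ∀ L : List K, ∃ ρ : B →ₗ[R] K, ∀ k ∈ L, ρ (i k) = k)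
    (X : Type) [AddCommGroup X] [Module Rᵐᵒᵖ X] :
    Function.Injective (BT.map (M := X) R i) := by
  rw [injective_iff_map_eq_zero]
  intro t ht
  obtain ⟨L, rfl⟩ := BT.exists_list t
  obtain ⟨ρ, hρ⟩ := hsplit (L.map Prod.snd)
  have h1 : BT.map (M := X) R (ρ.comp i) ((L.map fun p => BT.mk R p.1 p.2).sum)
      = (L.map fun p => BT.mk R p.1 p.2).sum := by
    rw [map_list_sum, List.map_map]
    congr 1
    refine List.map_congr_left fun p hp => ?_
    show BT.map R (ρ.comp i) (BT.mk R p.1 p.2) = BT.mk R p.1 p.2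
    rw [BT.map_mk]
    exact congrArg _ (hρ p.2 (List.mem_map_of_mem hp))
  rw [BT.map_comp', LinearMap.comp_apply, ht, map_zero] at h1
  exact h1.symm

/-- The dual of an `R`-linear map, as an `Rᵐᵒᵖ`-linear map between character modules. -/
def charDual {A B : Type} [AddCommGroup A] [Module R A] [AddCommGroup B] [Module R B]
    (f : A →ₗ[R] B) : CharacterModule B →ₗ[Rᵐᵒᵖ] CharacterModule A where
  toFun φ := (φ : B →+ _).comp f.toAddMonoidHom
  map_add' φ ψ := rfl
  map_smul' r φ := by
    refine DFunLike.ext _ _ fun a => ?_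
    show φ (r.unop • f a) = φ (f (r.unop • a))
    exact congrArg φ (f.map_smul r.unop a).symm

theorem charDual_apply {A B : Type} [AddCommGroup A] [Module R A] [AddCommGroup B] [Module R B]
    (f : A →ₗ[R] B) (φ : CharacterModule B) (a : A) : charDual f φ a = φ (f a) := rfl

theorem char_congr {B D : Type} [AddCommGroup B] [AddCommGroup D] (π : B →+ D)
    (φ : B →+ AddCircle (1 : ℚ)) (h0 : ∀ b, π b = 0 → φ b = 0) {b b' : B} (h : π b = π b') :
    φ b = φ b' := by
  have := h0 (b - b') (by rw [map_sub, h, sub_self])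
  rwa [map_sub, sub_eq_zero] at this

/-- Descend a character along a surjection on whose kernel it vanishes. -/
def descendChar {B D : Type} [AddCommGroup B] [AddCommGroup D] (π : B →+ D)
    (hsurj : Function.Surjective π) (φ : B →+ AddCircle (1 : ℚ))
    (h0 : ∀ b, π b = 0 → φ b = 0) : D →+ AddCircle (1 : ℚ) where
  toFun d := φ (Function.surjInv hsurj d)
  map_zero' := h0 _ (Function.surjInv_eq hsurj 0)
  map_add' d d' := by
    have h : π (Function.surjInv hsurj (d + d'))
        = π (Function.surjInv hsurj d + Function.surjInv hsurj d') := by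
      rw [map_add, Function.surjInv_eq hsurj, Function.surjInv_eq hsurj,
        Function.surjInv_eq hsurj]
    show φ (Function.surjInv hsurj (d + d'))
      = φ (Function.surjInv hsurj d) + φ (Function.surjInv hsurj d')
    rw [char_congr π φ h0 h, map_add]

theorem descendChar_apply {B D : Type} [AddCommGroup B] [AddCommGroup D] (π : B →+ D)
    (hsurj : Function.Surjective π) (φ : B →+ AddCircle (1 : ℚ))
    (h0 : ∀ b, π b = 0 → φ b = 0) (b : B) :
    descendChar π hsurj φ h0 (π b) = φ b :=
  char_congr π φ h0 (Function.surjInv_eq hsurj (π b))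

theorem charDual_comp_eq_id {A B : Type} [AddCommGroup A] [Module R A] [AddCommGroup B]
    [Module R B] (e : A ≃ₗ[R] B) :
    (charDual (e : A →ₗ[R] B)).comp (charDual (e.symm : B →ₗ[R] A)) = LinearMap.id :=
  LinearMap.ext fun φ => DFunLike.ext _ _ fun a =>
    show φ (e.symm (e a)) = φ a by rw [e.symm_apply_apply]

/-- A duality pair's left class is closed under isomorphisms. -/
theorem mem_of_equiv {Mcl : ModClass R} {Ncl : ModClass Rᵐᵒᵖ} (hdp : IsDualityPair R Mcl Ncl)
    {A B : Type} [AddCommGroup A] [Module R A] [AddCommGroup B] [Module R B]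
    (e : A ≃ₗ[R] B) (hB : ModuleCat.of R B ∈ Mcl) : ModuleCat.of R A ∈ Mcl := by
  have hBchar := (hdp.char_mem (ModuleCat.of R B)).mp hB
  have hsum := hdp.summand_closed (ModuleCat.of Rᵐᵒᵖ (CharacterModule B))
    (ModuleCat.of Rᵐᵒᵖ (CharacterModule A))
    (charDual (e.symm : B →ₗ[R] A)) (charDual (e : A →ₗ[R] B)) (charDual_comp_eq_id e) hBchar
  exact (hdp.char_mem (ModuleCat.of R A)).mpr hsum

/-- **Key lemma**: the left class of a duality pair is closed under quotients by
locally split kernels. -/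
theorem mem_of_pure_quotient {Mcl : ModClass R} {Ncl : ModClass Rᵐᵒᵖ}
    (hdp : IsDualityPair R Mcl Ncl) {B D : Type}
    [AddCommGroup B] [Module R B] [AddCommGroup D] [Module R D]
    (π : B →ₗ[R] D) (hsurj : Function.Surjective π)
    (hsplit : ∀ L : List ↥(LinearMap.ker π), ∃ ρ : B →ₗ[R] ↥(LinearMap.ker π),
      ∀ k ∈ L, ρ ((LinearMap.ker π).subtype k) = k)
    (hB : ModuleCat.of R B ∈ Mcl) : ModuleCat.of R D ∈ Mcl := by
  classical
  set K := ↥(LinearMap.ker π) with hK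
  set i : K →ₗ[R] B := (LinearMap.ker π).subtype with hi
  set X := CharacterModule K with hX
  have hinj : Function.Injective (BT.map (M := X) R i) :=
    bt_injective_of_locally_split i hsplit X
  -- the evaluation character on `X ⊗ K`
  let ηAux : TensorProduct ℤ X K →ₗ[ℤ] AddCircle (1 : ℚ) :=
    TensorProduct.lift (LinearMap.mk₂ ℤ (fun (x : X) (k : K) => x k)
      (fun x x' k => rfl) (fun z x k => rfl)
      (fun x k k' => map_add x k k') (fun z x k => map_zsmul x z k))
  have hηker : btRel R X K ≤ LinearMap.ker ηAux := by
    rw [btRel, Submodule.span_le]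
    rintro _ ⟨x, r, k, rfl⟩
    simp only [SetLike.mem_coe, LinearMap.mem_ker, map_sub]
    have h1 : ηAux ((op r • x) ⊗ₜ[ℤ] k) = x (r • k) := by
      show (op r • x) k = x (r • k)
      rw [instCharRight_smul_apply, unop_op]
    have h2 : ηAux (x ⊗ₜ[ℤ] (r • k)) = x (r • k) := rfl
    rw [h1, h2, sub_self]
  let η : BT R X K →ₗ[ℤ] AddCircle (1 : ℚ) := Submodule.liftQ _ ηAux hηker
  have hηmk : ∀ (x : X) (k : K), η (BT.mk R x k) = x k := fun x k => rfl
  -- extend it along the injection `X ⊗ K → X ⊗ B`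
  obtain ⟨χ, hχ⟩ := (Module.Baer.of_divisible (AddCircle (1 : ℚ))).extension_property_addMonoidHom
    (BT.map (M := X) R i).toAddMonoidHom hinj η.toAddMonoidHom
  have hχ' : ∀ t, χ (BT.map (M := X) R i t) = η t := fun t => DFunLike.congr_fun hχ t
  -- the partial retraction `s : X → B⁺`
  let s : X →ₗ[Rᵐᵒᵖ] CharacterModule B :=
    { toFun := fun x =>
        { toFun := fun b => χ (BT.mk R x b)
          map_zero' := by
            show χ (BT.mk R x 0) = 0
            rw [BT.mk_zero_right, map_zero]
          map_add' := fun b b' => by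
            show χ (BT.mk R x (b + b')) = χ (BT.mk R x b) + χ (BT.mk R x b')
            rw [BT.mk_add_right, map_add] }
      map_add' := fun x x' => by
        refine DFunLike.ext _ _ fun b => ?_
        show χ (BT.mk R (x + x') b) = χ (BT.mk R x b) + χ (BT.mk R x' b)
        rw [BT.mk_add_left, map_add]
      map_smul' := fun r x => by
        refine DFunLike.ext _ _ fun b => ?_
        show χ (BT.mk R (r • x) b) = χ (BT.mk R x (r.unop • b))
        have hr : BT.mk R (r • x) b = BT.mk R x (r.unop • b) := by
          have := BT.mk_rel (R := R) x r.unop b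
          rwa [op_unop] at this
        rw [hr] }
  have hs : ∀ (x : X) (k : K), s x (i k) = x k := by
    intro x k
    show χ (BT.mk R x (i k)) = x k
    have : BT.mk R x (i k) = BT.map (M := X) R i (BT.mk R x k) := rfl
    rw [this, hχ', hηmk]
  -- the dual maps
  let πd : CharacterModule D →ₗ[Rᵐᵒᵖ] CharacterModule B := charDual π
  let idu : CharacterModule B →ₗ[Rᵐᵒᵖ] X := charDual i
  have hdrop : ∀ φ : CharacterModule B, ∀ b, π b = 0 → ((φ : B →+ _) - s (idu φ)) b = 0 := by
    intro φ b hb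
    show φ b - s (idu φ) b = 0
    have hbK : b ∈ LinearMap.ker π := hb
    have h1 : s (idu φ) b = idu φ ⟨b, hbK⟩ := hs (idu φ) ⟨b, hbK⟩
    have h2 : idu φ ⟨b, hbK⟩ = φ b := rfl
    rw [h1, h2, sub_self]
  have hsurj' : Function.Surjective (π.toAddMonoidHom : B →+ D) := hsurj
  -- the retraction `p : B⁺ → D⁺`
  have hp : ∀ (φ : CharacterModule B) (b : B),
      descendChar π.toAddMonoidHom hsurj' ((φ : B →+ _) - s (idu φ)) (hdrop φ)
        (π.toAddMonoidHom b) = φ b - s (idu φ) b := by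
    intro φ b
    erw [descendChar_apply]
    rfl
  let p : CharacterModule B →ₗ[Rᵐᵒᵖ] CharacterModule D :=
    { toFun := fun φ =>
        descendChar π.toAddMonoidHom hsurj' ((φ : B →+ _) - s (idu φ)) (hdrop φ)
      map_add' := fun φ ψ => by
        refine DFunLike.ext _ _ fun d => ?_
        obtain ⟨b, rfl⟩ := hsurj' d
        erw [hp]
        show (φ + ψ) b - s (idu (φ + ψ)) b
          = descendChar π.toAddMonoidHom hsurj' ((φ : B →+ _) - s (idu φ)) (hdrop φ)
              (π.toAddMonoidHom b)
            + descendChar π.toAddMonoidHom hsurj' ((ψ : B →+ _) - s (idu ψ)) (hdrop ψ)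
              (π.toAddMonoidHom b)
        erw [hp, hp, map_add, map_add]
        show φ b + ψ b - (s (idu φ) b + s (idu ψ) b) = φ b - s (idu φ) b + (ψ b - s (idu ψ) b)
        abel
      map_smul' := fun r φ => by
        refine DFunLike.ext _ _ fun d => ?_
        obtain ⟨b, rfl⟩ := hsurj' d
        erw [hp]
        show (r • φ) b - s (idu (r • φ)) b
          = descendChar π.toAddMonoidHom hsurj' ((φ : B →+ _) - s (idu φ)) (hdrop φ)
              (r.unop • π.toAddMonoidHom b)
        have e3 : r.unop • (π.toAddMonoidHom b) = π.toAddMonoidHom (r.unop • b) :=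
          (π.map_smul r.unop b).symm
        erw [map_smul, map_smul, e3, hp]
        show φ (r.unop • b) - s (idu φ) (r.unop • b) = φ (r.unop • b) - s (idu φ) (r.unop • b)
        rfl }
  have hcomp : p.comp πd = LinearMap.id := by
    refine LinearMap.ext fun ψ => DFunLike.ext _ _ fun d => ?_
    obtain ⟨b, rfl⟩ := hsurj' d
    show descendChar π.toAddMonoidHom hsurj' ((πd ψ : B →+ _) - s (idu (πd ψ))) (hdrop (πd ψ))
      (π.toAddMonoidHom b) = ψ (π.toAddMonoidHom b)
    rw [hp]
    have h0 : idu (πd ψ) = 0 := by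
      refine DFunLike.ext _ _ fun k => ?_
      show ψ (π (i k)) = (0 : CharacterModule K) k
      have hk : π (i k) = 0 := k.2
      rw [hk, map_zero]
      rfl
    rw [h0, map_zero]
    show ψ (π b) - (0 : CharacterModule B) b = ψ (π b)
    have : (0 : CharacterModule B) b = 0 := rfl
    rw [this, sub_zero]
  -- conclude via the duality pair
  have hBchar : ModuleCat.of Rᵐᵒᵖ (CharacterModule B) ∈ Ncl :=
    (hdp.char_mem (ModuleCat.of R B)).mp hB
  have hDchar := hdp.summand_closed (ModuleCat.of Rᵐᵒᵖ (CharacterModule B))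
    (ModuleCat.of Rᵐᵒᵖ (CharacterModule D)) πd p hcomp hBchar
  exact (hdp.char_mem (ModuleCat.of R D)).mpr hDchar

theorem subset_foldr_union {α β : Type} [DecidableEq β] (g : α → Finset β) (L : List α) :
    ∀ k ∈ L, g k ⊆ L.foldr (fun a s => g a ∪ s) ∅ := by
  induction L with
  | nil => intro k hk; cases hk
  | cons a L ih =>
    intro k hk
    rcases List.mem_cons.mp hk with rfl | hk
    · exact Finset.subset_union_left
    · exact (ih k hk).trans Finset.subset_union_right

theorem exists_uniform_kill {ι : Type} [Preorder ι] [IsDirected ι (· ≤ ·)]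
    {G : ι → Type} [∀ i, AddCommGroup (G i)] [∀ i, Module R (G i)]
    (f : ∀ i j, i ≤ j → G i →ₗ[R] G j) [DirectedSystem G fun i j hij => f i j hij]
    (j₀ : ι) (L : List (G j₀))
    (hL : ∀ g ∈ L, ∃ j, ∃ h : j₀ ≤ j, f j₀ j h g = 0) :
    ∃ j, ∃ h : j₀ ≤ j, ∀ g ∈ L, f j₀ j h g = 0 := by
  induction L with
  | nil => exact ⟨j₀, le_rfl, fun g hg => absurd hg List.not_mem_nil⟩
  | cons a L ih =>
    obtain ⟨j1, h1, hL1⟩ := ih fun g hg => hL g (List.mem_cons_of_mem a hg)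
    obtain ⟨j2, h2, ha⟩ := hL a List.mem_cons_self
    obtain ⟨j3, h13, h23⟩ := exists_ge_ge j1 j2
    refine ⟨j3, le_trans h1 h13, fun g hg => ?_⟩
    rcases List.mem_cons.mp hg with rfl | hg
    · rw [← Module.DirectedSystem.map_map (f := f) h2 h23, ha, map_zero]
    · rw [← Module.DirectedSystem.map_map (f := f) h1 h13, hL1 g hg, map_zero]

theorem BT.mk_zsmul_left {M N : Type} [AddCommGroup M] [Module Rᵐᵒᵖ M]
    [AddCommGroup N] [Module R N] (z : ℤ) (m : M) (n : N) :
    BT.mk R (z • m) n = z • BT.mk R m n := by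
  exact map_zsmul ((btRel R M N).mkQ.toAddMonoidHom.comp
    ((TensorProduct.mk ℤ M N).flip n).toAddMonoidHom) z m

theorem BT.mk_zsmul_right {M N : Type} [AddCommGroup M] [Module Rᵐᵒᵖ M]
    [AddCommGroup N] [Module R N] (z : ℤ) (m : M) (n : N) :
    BT.mk R m (z • n) = z • BT.mk R m n := by
  exact map_zsmul ((btRel R M N).mkQ.toAddMonoidHom.comp
    (TensorProduct.mk ℤ M N m).toAddMonoidHom) z n

/-- Right exactness of the balanced tensor product: an element killed by the quotient map
comes from the submodule. -/
theorem bt_exact {W F' : Type} [AddCommGroup W] [Module Rᵐᵒᵖ W] [AddCommGroup F']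
    [Module R F'] (Mk : Submodule Rᵐᵒᵖ W) (t : BT R W F')
    (ht : BT.mapLeft (N := F') R Mk.mkQ t = 0) :
    ∃ t', BT.mapLeft (N := F') R Mk.subtype t' = t := by
  classical
  set Q : Submodule ℤ (BT R W F') := LinearMap.range (BT.mapLeft (N := F') R Mk.subtype)
    with hQ
  suffices hsuff : t ∈ Q by exact hsuff
  -- construct `σ : BT R (W ⧸ Mk) F' → (BT R W F') ⧸ Q`
  let δ0 : W →ₗ[ℤ] (F' →ₗ[ℤ] (BT R W F' ⧸ Q)) :=
    { toFun := fun w =>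
        { toFun := fun y => Q.mkQ (BT.mk R w y)
          map_add' := fun y y' => by
            show Q.mkQ (BT.mk R w (y + y')) = Q.mkQ (BT.mk R w y) + Q.mkQ (BT.mk R w y')
            rw [BT.mk_add_right, map_add]
          map_smul' := fun z y => by
            show Q.mkQ (BT.mk R w (z • y)) = z • Q.mkQ (BT.mk R w y)
            rw [BT.mk_zsmul_right, map_smul] }
      map_add' := fun w w' => by
        refine LinearMap.ext fun y => ?_
        show Q.mkQ (BT.mk R (w + w') y) = Q.mkQ (BT.mk R w y) + Q.mkQ (BT.mk R w' y)
        rw [BT.mk_add_left, map_add]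
      map_smul' := fun z w => by
        refine LinearMap.ext fun y => ?_
        show Q.mkQ (BT.mk R (z • w) y) = z • Q.mkQ (BT.mk R w y)
        rw [BT.mk_zsmul_left, map_smul] }
  have hkill : Mk.restrictScalars ℤ ≤ LinearMap.ker δ0 := by
    intro w hw
    rw [LinearMap.mem_ker]
    refine LinearMap.ext fun y => ?_
    show Q.mkQ (BT.mk R w y) = 0
    rw [Submodule.mkQ_apply, Submodule.Quotient.mk_eq_zero]
    exact ⟨BT.mk R (⟨w, hw⟩ : ↥Mk) y, rfl⟩
  let δ1 := Submodule.liftQ (Mk.restrictScalars ℤ) δ0 hkill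
  let e := Submodule.Quotient.restrictScalarsEquiv ℤ Mk
  let δ2 : (W ⧸ Mk) →ₗ[ℤ] (F' →ₗ[ℤ] (BT R W F' ⧸ Q)) := δ1.comp (e.symm : _ →ₗ[ℤ] _)
  have hδ2 : ∀ w : W, δ2 (Submodule.Quotient.mk w) = δ0 w := by
    intro w
    show δ1 (e.symm (Submodule.Quotient.mk w)) = δ0 w
    rw [Submodule.Quotient.restrictScalarsEquiv_symm_mk]
    exact Submodule.liftQ_apply _ δ0 w
  let σAux : TensorProduct ℤ (W ⧸ Mk) F' →ₗ[ℤ] (BT R W F' ⧸ Q) := TensorProduct.lift δ2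
  have hσker : btRel R (W ⧸ Mk) F' ≤ LinearMap.ker σAux := by
    rw [btRel, Submodule.span_le]
    rintro _ ⟨w', r, y, rfl⟩
    obtain ⟨w, rfl⟩ := Submodule.Quotient.mk_surjective Mk w'
    simp only [SetLike.mem_coe, LinearMap.mem_ker, map_sub]
    have h1 : σAux ((op r • Submodule.Quotient.mk w) ⊗ₜ[ℤ] y) = Q.mkQ (BT.mk R (op r • w) y) := by
      have : (op r • Submodule.Quotient.mk w : W ⧸ Mk) = Submodule.Quotient.mk (op r • w) :=
        (Submodule.Quotient.mk_smul Mk (op r) w).symm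
      rw [this]
      show δ2 (Submodule.Quotient.mk (op r • w)) y = _
      rw [hδ2]
      rfl
    have h2 : σAux (Submodule.Quotient.mk w ⊗ₜ[ℤ] (r • y)) = Q.mkQ (BT.mk R w (r • y)) := by
      show δ2 (Submodule.Quotient.mk w) (r • y) = _
      rw [hδ2]
      rfl
    rw [h1, h2, BT.mk_rel, sub_self]
  let σ : BT R (W ⧸ Mk) F' →ₗ[ℤ] (BT R W F' ⧸ Q) := Submodule.liftQ _ σAux hσker
  have hσ : ∀ t0 : BT R W F', σ (BT.mapLeft (N := F') R Mk.mkQ t0) = Q.mkQ t0 := by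
    have : σ.comp (BT.mapLeft (N := F') R Mk.mkQ) = Q.mkQ := by
      refine BT.hom_ext fun w y => ?_
      show σ (BT.mk R (Mk.mkQ w) y) = Q.mkQ (BT.mk R w y)
      show δ2 (Mk.mkQ w) y = Q.mkQ (BT.mk R w y)
      rw [Submodule.mkQ_apply, hδ2]
      rfl
    exact fun t0 => DFunLike.congr_fun this t0
  have := hσ t
  rw [ht, map_zero] at this
  rw [← Submodule.Quotient.mk_eq_zero Q]
  exact this.symm

theorem sum_list_sum_comm {α β A : Type} [AddCommMonoid A] (s : Finset α) (Lc : List β)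
    (f : α → β → A) :
    ∑ i ∈ s, (Lc.map (f i)).sum = (Lc.map fun p => ∑ i ∈ s, f i p).sum := by
  induction Lc with
  | nil => simp
  | cons a Lc ih => simp [Finset.sum_add_distrib, ih]

/-- Flatness gives local splittings of the kernel of the canonical free presentation. -/
theorem flat_local_split {F : Type} [AddCommGroup F] [Module R F] (hF : IsFlatModule R F)
    (L : List ↥(LinearMap.ker (Finsupp.linearCombination R (id : F → F)))) :
    ∃ ρ : (F →₀ R) →ₗ[R] ↥(LinearMap.ker (Finsupp.linearCombination R (id : F → F))),
      ∀ k ∈ L, ρ ((LinearMap.ker (Finsupp.linearCombination R (id : F → F))).subtype k) = k := by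
  classical
  revert L
  set π : (F →₀ R) →ₗ[R] F := Finsupp.linearCombination R (id : F → F) with hπ
  intro L
  have hπs : ∀ (y : F) (c : R), π (Finsupp.single y c) = c • y := by
    intro y c
    rw [hπ, Finsupp.linearCombination_single]
    rfl
  set T : Finset F := L.foldr (fun k s => ((k : ↥(LinearMap.ker π)) : F →₀ R).support ∪ s) ∅
    with hT
  have hsupp : ∀ k ∈ L, ((k : ↥(LinearMap.ker π)) : F →₀ R).support ⊆ T :=
    subset_foldr_union _ L
  have hksum : ∀ k ∈ L,
      (∑ x ∈ T, Finsupp.single x (((k : ↥(LinearMap.ker π)) : F →₀ R) x))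
        = ((k : ↥(LinearMap.ker π)) : F →₀ R) := by
    intro k hk
    conv_rhs => rw [← Finsupp.sum_single ((k : ↥(LinearMap.ker π)) : F →₀ R), Finsupp.sum]
    symm
    apply Finset.sum_subset (hsupp k hk)
    intro x _ hx
    rw [Finsupp.notMem_support_iff.mp hx, Finsupp.single_zero]
  have hrel : ∀ k ∈ L,
      (∑ m ∈ T.attach, (((k : ↥(LinearMap.ker π)) : F →₀ R) m.1) • (m.1 : F)) = 0 := by
    intro k hk
    have h0 : π ((k : ↥(LinearMap.ker π)) : F →₀ R) = 0 := k.2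
    rw [← h0]
    conv_rhs => rw [← hksum k hk]
    rw [map_sum,
      Finset.sum_attach T fun x => (((k : ↥(LinearMap.ker π)) : F →₀ R) x) • (x : F)]
    exact Finset.sum_congr rfl fun x _ => (hπs x _).symm
  -- the relation matrix and the associated map of right modules
  set n := L.length with hn
  let a : Fin n → {x // x ∈ T} → R := fun l m => ((L.get l : ↥(LinearMap.ker π)) : F →₀ R) m.1
  let μ : ({x // x ∈ T} → R) →ₗ[Rᵐᵒᵖ] (Fin n → R) :=
    { toFun := fun v l => ∑ m, a l m * v m
      map_add' := fun v v' => by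
        funext l
        show ∑ m, a l m * (v m + v' m) = (∑ m, a l m * v m) + ∑ m, a l m * v' m
        rw [← Finset.sum_add_distrib]
        exact Finset.sum_congr rfl fun m _ => mul_add _ _ _
      map_smul' := fun r v => by
        funext l
        show ∑ m, a l m * (v m * r.unop) = (∑ m, a l m * v m) * r.unop
        rw [Finset.sum_mul]
        exact Finset.sum_congr rfl fun m _ => (mul_assoc _ _ _).symm }
  let w : BT R ({x // x ∈ T} → R) F := ∑ m, BT.mk R (Pi.single m (1 : R)) (m.1 : F)
  have hμsingle : ∀ m, μ (Pi.single m (1 : R)) = fun l => a l m := by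
    intro m
    funext l
    show ∑ m', a l m' * (Pi.single m (1 : R) : {x // x ∈ T} → R) m' = a l m
    have hb : ∀ m', a l m' * (Pi.single m (1 : R) : {x // x ∈ T} → R) m'
        = if m' = m then a l m' else 0 := by
      intro m'
      rcases eq_or_ne m' m with rfl | hne
      · rw [Pi.single_eq_same, mul_one, if_pos rfl]
      · rw [Pi.single_eq_of_ne hne, mul_zero, if_neg hne]

    rw [Finset.sum_congr rfl fun m' _ => hb m', Finset.sum_ite_eq' Finset.univ m fun m' => a l m',
      if_pos (Finset.mem_univ m)]
  have hstepA : BT.mapLeft (N := F) R μ w = 0 := by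
    rw [map_sum]
    have h1 : ∀ m, BT.mapLeft (N := F) R μ (BT.mk R (Pi.single m (1 : R)) (m.1 : F))
        = ∑ l, BT.mk R (Pi.single l (a l m)) (m.1 : F) := by
      intro m
      rw [BT.mapLeft_mk', hμsingle m]
      have hfun : (fun l => a l m) = ∑ l, Pi.single l (a l m) := (Finset.univ_sum_single _).symm
      rw [hfun, BT.mk_sum_left']
    rw [Finset.sum_congr rfl fun m _ => h1 m]
    have h2 : ∀ l m, BT.mk R (Pi.single l (a l m) : Fin n → R) (m.1 : F)
        = BT.mk R (Pi.single l (1 : R) : Fin n → R) (a l m • (m.1 : F)) := by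
      intro l m
      have hs : (Pi.single l (a l m) : Fin n → R)
          = op (a l m) • (Pi.single l (1 : R) : Fin n → R) := by
        funext l'
        show (Pi.single l (a l m) : Fin n → R) l' = (Pi.single l (1 : R) : Fin n → R) l' * a l m
        rcases eq_or_ne l' l with rfl | hne
        · rw [Pi.single_eq_same, Pi.single_eq_same, one_mul]
        · rw [Pi.single_eq_of_ne hne, Pi.single_eq_of_ne hne, zero_mul]
      rw [hs, BT.mk_rel]
    rw [Finset.sum_congr rfl fun m _ => Finset.sum_congr rfl fun l _ => h2 l m, Finset.sum_comm]
    have h3 : ∀ l : Fin n,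
        (∑ m, BT.mk R (Pi.single l (1 : R) : Fin n → R) (a l m • (m.1 : F))) = 0 := by
      intro l
      rw [← BT.mk_sum_right']
      have hz : (∑ m : {x // x ∈ T}, a l m • (m.1 : F)) = 0 := by
        rw [Finset.univ_eq_attach]
        exact hrel (L.get l) (List.get_mem L l)
      rw [hz, BT.mk_zero_right]
    rw [Finset.sum_congr rfl fun l _ => h3 l, Finset.sum_const_zero]
  -- factor through the quotient by the kernel and use flatness
  set Mker := LinearMap.ker μ with hMker
  let μbar := Submodule.liftQ Mker μ le_rfl
  have hinjbar : Function.Injective μbar := by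
    rw [← LinearMap.ker_eq_bot]
    exact Submodule.ker_liftQ_eq_bot _ _ _ le_rfl
  have hfac : BT.mapLeft (N := F) R μ = (BT.mapLeft R μbar).comp (BT.mapLeft R Mker.mkQ) := by
    rw [← BT.mapLeft_comp']
    congr 1
  have hq0 : BT.mapLeft (N := F) R Mker.mkQ w = 0 := by
    apply hF _ _ μbar hinjbar
    have h9 := hstepA
    rw [hfac] at h9
    rw [map_zero]
    exact h9
  obtain ⟨t', ht'⟩ := bt_exact Mker w hq0
  obtain ⟨Lc, rfl⟩ := BT.exists_list t'
  have hw : w = (Lc.map fun p => BT.mk R ((p.1 : {x // x ∈ T} → R)) p.2).sum := by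
    rw [← ht', map_list_sum, List.map_map]
    rfl
  -- extract the coefficients via the coordinate projections
  have hcomm : ∀ (c : R) (z : ℤ) (y : F), c • z • y = z • c • y :=
    fun c z y => (smul_comm z c y).symm
  let prAux : {x // x ∈ T} → (TensorProduct ℤ ({x // x ∈ T} → R) F →ₗ[ℤ] F) := fun m =>
    TensorProduct.lift (LinearMap.mk₂ ℤ (fun (v : {x // x ∈ T} → R) (y : F) => v m • y)
      (fun v v' y => add_smul (v m) (v' m) y)
      (fun z v y => smul_assoc z (v m) y)
      (fun v y y' => smul_add (v m) y y')
      (fun z v y => hcomm (v m) z y))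
  have hprker : ∀ m, btRel R ({x // x ∈ T} → R) F ≤ LinearMap.ker (prAux m) := by
    intro m
    rw [btRel, Submodule.span_le]
    rintro _ ⟨v, r, y, rfl⟩
    simp only [SetLike.mem_coe, LinearMap.mem_ker, map_sub]
    have e1 : prAux m ((op r • v) ⊗ₜ[ℤ] y) = (v m * r) • y := rfl
    have e2 : prAux m (v ⊗ₜ[ℤ] (r • y)) = v m • r • y := rfl
    rw [e1, e2, mul_smul, sub_self]
  let pr : {x // x ∈ T} → (BT R ({x // x ∈ T} → R) F →ₗ[ℤ] F) := fun m =>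
    Submodule.liftQ _ (prAux m) (hprker m)
  have hpr : ∀ m v y, pr m (BT.mk R v y) = v m • y := fun m v y => rfl
  have hyval : ∀ m : {x // x ∈ T},
      (m.1 : F) = (Lc.map fun p => ((p.1 : {x // x ∈ T} → R) m) • p.2).sum := by
    intro m
    have h5 := congrArg (pr m) hw
    rw [map_sum, map_list_sum, List.map_map] at h5
    have h6 : ∀ m', pr m (BT.mk R (Pi.single m' (1 : R)) (m'.1 : F))
        = if m = m' then (m'.1 : F) else 0 := by
      intro m'
      rw [hpr]
      rcases eq_or_ne m m' with rfl | hne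
      · rw [Pi.single_eq_same, one_smul, if_pos rfl]
      · rw [Pi.single_eq_of_ne hne, zero_smul, if_neg hne]
    rw [Finset.sum_congr rfl fun m' _ => h6 m',
      Finset.sum_ite_eq Finset.univ m fun m' => (m'.1 : F), if_pos (Finset.mem_univ m)] at h5
    exact h5
  -- build the splitting
  let qv : {x // x ∈ T} → (F →₀ R) := fun m =>
    Finsupp.single (m.1 : F) (1 : R)
      - (Lc.map fun p => ((p.1 : {x // x ∈ T} → R) m) • Finsupp.single (p.2 : F) (1 : R)).sum
  have hmemq : ∀ m : {x // x ∈ T}, qv m ∈ LinearMap.ker π := by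
    intro m
    show (Finsupp.single (m.1 : F) (1 : R)
      - (Lc.map fun p => ((p.1 : {x // x ∈ T} → R) m) • Finsupp.single (p.2 : F) (1 : R)).sum)
      ∈ LinearMap.ker π
    rw [LinearMap.mem_ker, map_sub, map_list_sum, List.map_map]
    have h7 : π (Finsupp.single (m.1 : F) (1 : R)) = (m.1 : F) := by
      rw [hπs, one_smul]
    have h8 : Lc.map (⇑π ∘ fun p => ((p.1 : {x // x ∈ T} → R) m)
          • Finsupp.single (p.2 : F) (1 : R))
        = Lc.map fun p => ((p.1 : {x // x ∈ T} → R) m) • p.2 := by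
      refine List.map_congr_left fun p hp => ?_
      show π (((p.1 : {x // x ∈ T} → R) m) • Finsupp.single (p.2 : F) (1 : R)) = _
      rw [map_smul, hπs, one_smul]
    rw [h7, h8, ← hyval m, sub_self]
  let g : F → ↥(LinearMap.ker π) := fun x =>
    if hx : x ∈ T then ⟨qv ⟨x, hx⟩, hmemq ⟨x, hx⟩⟩ else 0
  refine ⟨Finsupp.linearCombination R g, ?_⟩
  intro k hk
  refine Subtype.ext ?_
  show (LinearMap.ker π).subtype (Finsupp.linearCombination R g
      ((LinearMap.ker π).subtype k)) = (LinearMap.ker π).subtype k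
  have hval : (LinearMap.ker π).subtype (Finsupp.linearCombination R g
        ((LinearMap.ker π).subtype k))
      = ∑ x ∈ ((k : ↥(LinearMap.ker π)) : F →₀ R).support,
          ((k : ↥(LinearMap.ker π)) : F →₀ R) x • ((g x : F →₀ R)) := by
    rw [Finsupp.linearCombination_apply, map_finsuppSum]
    rfl
  rw [hval, Finset.sum_subset (hsupp k hk) (fun x _ hx => by
    rw [Finsupp.notMem_support_iff.mp hx, zero_smul]),
    ← Finset.sum_attach T fun x => ((k : ↥(LinearMap.ker π)) : F →₀ R) x • ((g x : F →₀ R))]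
  have hgx : ∀ m : {x // x ∈ T}, g m.1 = ⟨qv m, hmemq m⟩ := by
    intro m
    show (if hx : (m.1 : F) ∈ T
        then (⟨qv ⟨m.1, hx⟩, hmemq ⟨m.1, hx⟩⟩ : ↥(LinearMap.ker π)) else 0) = ⟨qv m, hmemq m⟩
    rw [dif_pos m.2]
  have hsplit2 : (∑ m ∈ T.attach,
        ((k : ↥(LinearMap.ker π)) : F →₀ R) m.1 • ((g m.1 : F →₀ R)))
      = (∑ m ∈ T.attach, Finsupp.single (m.1 : F) (((k : ↥(LinearMap.ker π)) : F →₀ R) m.1))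
        - (∑ m ∈ T.attach, (Lc.map fun p =>
            (((k : ↥(LinearMap.ker π)) : F →₀ R) m.1 * ((p.1 : {x // x ∈ T} → R) m))
              • Finsupp.single (p.2 : F) (1 : R)).sum) := by
    rw [← Finset.sum_sub_distrib]
    refine Finset.sum_congr rfl fun m _ => ?_
    rw [hgx m]
    show ((k : ↥(LinearMap.ker π)) : F →₀ R) m.1 • (Finsupp.single (m.1 : F) (1 : R)
      - (Lc.map fun p => ((p.1 : {x // x ∈ T} → R) m)
          • Finsupp.single (p.2 : F) (1 : R)).sum) = _
    rw [smul_sub]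
    congr 1
    · rw [Finsupp.smul_single, smul_eq_mul, mul_one]
    · rw [List.smul_sum, List.map_map]
      refine congrArg List.sum ?_
      refine List.map_congr_left fun p hp => ?_
      show ((k : ↥(LinearMap.ker π)) : F →₀ R) m.1
          • (((p.1 : {x // x ∈ T} → R) m) • Finsupp.single (p.2 : F) (1 : R)) = _
      rw [smul_smul]
  rw [hsplit2]
  have hfirst : (∑ m ∈ T.attach,
      Finsupp.single (m.1 : F) (((k : ↥(LinearMap.ker π)) : F →₀ R) m.1))
      = ((k : ↥(LinearMap.ker π)) : F →₀ R) := by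
    rw [Finset.sum_attach T fun x => Finsupp.single x (((k : ↥(LinearMap.ker π)) : F →₀ R) x)]
    exact hksum k hk
  have hsecond : (∑ m ∈ T.attach, (Lc.map fun p =>
      (((k : ↥(LinearMap.ker π)) : F →₀ R) m.1 * ((p.1 : {x // x ∈ T} → R) m))
        • Finsupp.single (p.2 : F) (1 : R)).sum) = 0 := by
    rw [sum_list_sum_comm]
    have hz : ∀ p ∈ Lc, (∑ m ∈ T.attach,
        (((k : ↥(LinearMap.ker π)) : F →₀ R) m.1 * ((p.1 : {x // x ∈ T} → R) m))
          • Finsupp.single (p.2 : F) (1 : R)) = (0 : F →₀ R) := by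
      intro p hp
      rw [← Finset.sum_smul]
      obtain ⟨l, hl⟩ := List.get_of_mem hk
      have hμ0 : μ (p.1 : {x // x ∈ T} → R) = 0 := LinearMap.mem_ker.mp p.1.2
      have hsum : (∑ m ∈ T.attach,
          ((k : ↥(LinearMap.ker π)) : F →₀ R) m.1 * ((p.1 : {x // x ∈ T} → R) m))
          = μ (p.1 : {x // x ∈ T} → R) l := by
        show _ = ∑ m, a l m * (p.1 : {x // x ∈ T} → R) m
        rw [Finset.univ_eq_attach]
        refine Finset.sum_congr rfl fun m _ => ?_
        show ((k : ↥(LinearMap.ker π)) : F →₀ R) m.1 * _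
            = ((L.get l : ↥(LinearMap.ker π)) : F →₀ R) m.1 * _
        rw [hl]
      rw [hsum, hμ0]
      rw [Pi.zero_apply, zero_smul]
    rw [List.map_congr_left hz]
    simp
  rw [hfirst, hsecond, sub_zero]
  rfl

end Stmt7Aux

/-- If `(M, N)` is a perfect duality pair over `R` then `M` is closed under
direct limits, and consequently every flat left `R`-module belongs to `M`. -/
theorem stmt7 (R : Type) [Ring R] (M : ModClass R) (N : ModClass Rᵐᵒᵖ)
    (h : IsDualityPair R M N)
    (hcoprod : ∀ (ι : Type) (Y : ι → ModuleCat.{0} R), (∀ i, Y i ∈ M) →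
      ModuleCat.of R (DirectSum ι fun i => ↥(Y i)) ∈ M)
    (hext : ExtClosed R M)
    (hR : ModuleCat.of R R ∈ M) :
    (∀ (ι : Type) [Preorder ι] [IsDirected ι (· ≤ ·)] [Nonempty ι] [DecidableEq ι]
      (G : ι → Type) [∀ i, AddCommGroup (G i)] [∀ i, Module R (G i)]
      (f : ∀ i j, i ≤ j → G i →ₗ[R] G j) [DirectedSystem G fun i j hij => f i j hij],
      (∀ i, ModuleCat.of R (G i) ∈ M) →
        ModuleCat.of R (Module.DirectLimit G f) ∈ M) ∧
    (∀ (F : Type) [AddCommGroup F] [Module R F],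
      IsFlatModule R F → ModuleCat.of R F ∈ M) := by
  constructor
  · intro ι _ _ _ _ G _ _ f _ hG
    classical
    let π : DirectSum ι G →ₗ[R] Module.DirectLimit G f :=
      DirectSum.toModule R ι _ fun i => Module.DirectLimit.of R ι G f i
    have hπof : ∀ (i) (x : G i),
        π (DirectSum.lof R ι G i x) = Module.DirectLimit.of R ι G f i x :=
      fun i x => DirectSum.toModule_lof R i x
    have hsurj : Function.Surjective π := by
      intro z
      induction z using Module.DirectLimit.induction_on with
      | ih i x => exact ⟨DirectSum.lof R ι G i x, hπof i x⟩
    have hB : ModuleCat.of R (DirectSum ι G) ∈ M := hcoprod ι (fun i => ModuleCat.of R (G i)) hG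
    refine mem_of_pure_quotient h π hsurj ?_ hB
    intro L
    -- the union of the supports of the elements of `L`
    set S : Finset ι :=
      L.foldr (fun k s => DFinsupp.support ((k : ↥(LinearMap.ker π)) : DirectSum ι G) ∪ s) ∅
      with hS
    have hsupp : ∀ k ∈ L, DFinsupp.support ((k : ↥(LinearMap.ker π)) : DirectSum ι G) ⊆ S :=
      subset_foldr_union _ L
    obtain ⟨j₀, hj₀⟩ := S.exists_le
    have hksum : ∀ k ∈ L,
        (∑ i ∈ S, DirectSum.lof R ι G i ((k : DirectSum ι G) i)) = (k : DirectSum ι G) := by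
      intro k hk
      have hx := DirectSum.sum_support_of (ι := ι) (β := G) ((k : ↥(LinearMap.ker π)) : DirectSum ι G)
      simp only [← DirectSum.lof_eq_of R] at hx
      conv_rhs => rw [← hx]
      symm
      apply Finset.sum_subset (hsupp k hk)
      intro i _ hi
      rw [DFinsupp.notMem_support_iff.mp hi, map_zero]
    -- push everything into `G j₀`
    set T : ↥(LinearMap.ker π) → G j₀ :=
      fun t => ∑ i ∈ S.attach, f i.1 j₀ (hj₀ i.1 i.2) ((t : DirectSum ι G) i.1) with hT
    have hofT : ∀ k ∈ L, Module.DirectLimit.of R ι G f j₀ (T k) = 0 := by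
      intro k hk
      have step : Module.DirectLimit.of R ι G f j₀ (T k) = π (k : DirectSum ι G) := by
        rw [hT, map_sum]
        have : ∀ i : {x // x ∈ S},
            Module.DirectLimit.of R ι G f j₀ (f i.1 j₀ (hj₀ i.1 i.2) ((k : DirectSum ι G) i.1))
              = π (DirectSum.lof R ι G i.1 ((k : DirectSum ι G) i.1)) := by
          intro i
          rw [Module.DirectLimit.of_f, hπof]
        rw [Finset.sum_congr rfl fun i _ => this i, ← map_sum,
          Finset.sum_attach S fun i => DirectSum.lof R ι G i ((k : DirectSum ι G) i),
          hksum k hk]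
      rw [step, LinearMap.mem_ker.mp k.2]
    obtain ⟨js, hjs, hkill⟩ := exists_uniform_kill f j₀ (L.map T) (by
      rintro g hg
      obtain ⟨k, hk, rfl⟩ := List.mem_map.mp hg
      exact Module.DirectLimit.of.zero_exact (hofT k hk))
    -- choose the comparison indices
    have hchoice : ∀ i : ι, ∃ j, i ≤ j ∧ (i ∈ S → j = js) := by
      intro i
      by_cases hi : i ∈ S
      · exact ⟨js, le_trans (hj₀ i hi) hjs, fun _ => rfl⟩
      · exact ⟨i, le_rfl, fun hmem => absurd hmem hi⟩
    choose u hu hus using hchoice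
    have hmem : ∀ (i : ι) (g : G i),
        DirectSum.lof R ι G i g - DirectSum.lof R ι G (u i) (f i (u i) (hu i) g)
          ∈ LinearMap.ker π := by
      intro i g
      rw [LinearMap.mem_ker, map_sub, hπof, hπof, Module.DirectLimit.of_f, sub_self]
    let ρi : ∀ i, G i →ₗ[R] ↥(LinearMap.ker π) := fun i =>
      LinearMap.codRestrict (LinearMap.ker π)
        (DirectSum.lof R ι G i - (DirectSum.lof R ι G (u i)).comp (f i (u i) (hu i)))
        fun g => hmem i g
    refine ⟨DirectSum.toModule R ι _ ρi, ?_⟩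
    intro k hk
    refine Subtype.ext ?_
    have hterm : ∀ (i j : ι) (hij : i ≤ j) (hjeq : j = js) (x : G i),
        DirectSum.lof R ι G j (f i j hij x)
          = DirectSum.lof R ι G js (f i js (hjeq ▸ hij) x) := by
      rintro i j hij rfl x; rfl
    have key : ((LinearMap.ker π).subtype)
        (DirectSum.toModule R ι _ ρi (k : DirectSum ι G)) = (k : DirectSum ι G) := by
      conv_lhs => rw [← hksum k hk]
      rw [map_sum, map_sum]
      have h1 : ∀ i : ι, (LinearMap.ker π).subtype
          (DirectSum.toModule R ι _ ρi (DirectSum.lof R ι G i ((k : DirectSum ι G) i)))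
          = DirectSum.lof R ι G i ((k : DirectSum ι G) i)
            - DirectSum.lof R ι G (u i) (f i (u i) (hu i) ((k : DirectSum ι G) i)) := by
        intro i
        rw [DirectSum.toModule_lof]
        rfl
      rw [Finset.sum_congr rfl fun i _ => h1 i, Finset.sum_sub_distrib, hksum k hk]
      have h2 : (∑ i ∈ S, DirectSum.lof R ι G (u i)
          (f i (u i) (hu i) ((k : DirectSum ι G) i))) = 0 := by
        rw [← Finset.sum_attach S fun i =>
          DirectSum.lof R ι G (u i) (f i (u i) (hu i) ((k : DirectSum ι G) i))]
        have h3 : ∀ i : {x // x ∈ S},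
            DirectSum.lof R ι G (u i.1) (f i.1 (u i.1) (hu i.1) ((k : DirectSum ι G) i.1))
            = DirectSum.lof R ι G js
                (f i.1 js ((hus i.1 i.2) ▸ (hu i.1)) ((k : DirectSum ι G) i.1)) :=
          fun i => hterm i.1 (u i.1) (hu i.1) (hus i.1 i.2) _
        rw [Finset.sum_congr rfl fun i _ => h3 i, ← map_sum]
        have h4 : (∑ i ∈ S.attach,
            f i.1 js ((hus i.1 i.2) ▸ (hu i.1)) ((k : DirectSum ι G) i.1))
            = f j₀ js hjs (T k) := by
          rw [hT, map_sum]
          refine Finset.sum_congr rfl fun i _ => ?_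
          rw [Module.DirectedSystem.map_map (f := f)]
        rw [h4, hkill (T k) (List.mem_map_of_mem (f := T) hk), map_zero]
      rw [h2, sub_zero]
    exact key
  · intro F _ _ hF
    classical
    have hsurj : Function.Surjective (Finsupp.linearCombination R (id : F → F)) := by
      intro y
      refine ⟨Finsupp.single y 1, ?_⟩
      rw [Finsupp.linearCombination_single, one_smul]
      rfl
    have hfree : ModuleCat.of R (F →₀ R) ∈ M :=
      mem_of_equiv h (finsuppLEquivDirectSum R R F)
        (hcoprod F (fun _ => ModuleCat.of R R) fun _ => hR)
    exact mem_of_pure_quotient h (Finsupp.linearCombination R (id : F → F)) hsurj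
      (flat_local_split hF) hfree
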